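/- Let a, b ∈ ℝ with a > −1 and b > −1, and let p ≥ 1 be real. There exists a constant C > 0, depending only on a, b and p, such that for every integer N ≥ 2, every real t with N^{−2} < t < 1, and every measurable function I : (0,1) → ℝ satisfying |I(s)| ≤ min(N² s, 1) + log(max(N² s, 1)) for all s ∈ (0,1), one has ∫_0^t (t−s)^a |I(s)|^p s^b ds ≤ C · t^{a+b+1} (log N)^p. -/

import Mathlib

open MeasureTheory Real Set intervalIntegral

private lemma one_le_two_rpow_abs (r : ℝ) : (1:ℝ) ≤ (2:ℝ) ^ |r| := by
  calc (1:ℝ) = (2:ℝ) ^ (0:ℝ) := by simp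
  _ ≤ (2:ℝ) ^ |r| := Real.rpow_le_rpow_of_exponent_le one_le_two (abs_nonneg r)

private lemma half_rpow_bound {t x r : ℝ} (ht : 0 < t) (h1 : t/2 ≤ x) (h2 : x ≤ t) :
    x ^ r ≤ 2 ^ |r| * t ^ r := by
  have hx : 0 < x := lt_of_lt_of_le (by linarith) h1
  rcases le_or_gt 0 r with hr | hr
  · calc x ^ r ≤ t ^ r := Real.rpow_le_rpow hx.le h2 hr
    _ = 1 * t ^ r := (one_mul _).symm
    _ ≤ 2 ^ |r| * t ^ r :=
      mul_le_mul_of_nonneg_right (one_le_two_rpow_abs r) (Real.rpow_nonneg ht.le r)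
  · calc x ^ r ≤ (t/2) ^ r :=
        Real.rpow_le_rpow_of_nonpos (by linarith) h1 hr.le
    _ = 2 ^ |r| * t ^ r := by
        rw [abs_of_neg hr, Real.rpow_neg (by norm_num : (0:ℝ) ≤ 2),
          Real.div_rpow ht.le (by norm_num : (0:ℝ) ≤ 2)]
        ring

theorem stmt6 (a b p : ℝ) (ha : -1 < a) (hb : -1 < b) (hp : 1 ≤ p) :
    ∃ C : ℝ, 0 < C ∧
      ∀ N : ℕ, 2 ≤ N → ∀ t : ℝ, ((N : ℝ) ^ 2)⁻¹ < t → t < 1 →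
      ∀ I : ℝ → ℝ, Measurable I →
        (∀ s ∈ Set.Ioo (0 : ℝ) 1,
          |I s| ≤ min ((N : ℝ) ^ 2 * s) 1 + Real.log (max ((N : ℝ) ^ 2 * s) 1)) →
        ∫ s in (0 : ℝ)..t, (t - s) ^ a * |I s| ^ p * s ^ b
          ≤ C * t ^ (a + b + 1) * (Real.log N) ^ p := by
  have hlog2 : 0 < Real.log 2 := Real.log_pos one_lt_two
  have ha1 : 0 < a + 1 := by linarith
  have hb1 : 0 < b + 1 := by linarith
  have hp0 : (0:ℝ) ≤ p := by linarith
  set M : ℝ := 1 / Real.log 2 + 2 with hM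
  have hM0 : 0 < M := by positivity
  refine ⟨M ^ p * ((2:ℝ) ^ |a| * ((2:ℝ) ^ |b+1| / (b+1)) +
      (2:ℝ) ^ |b| * ((2:ℝ) ^ |a+1| / (a+1))), by positivity, ?_⟩
  intro N hN t htl htu I hImeas hI
  have hN2 : (2:ℝ) ≤ (N:ℝ) := by exact_mod_cast hN
  have ht0 : 0 < t := lt_trans (by positivity) htl
  have ht2 : 0 < t / 2 := by linarith
  set L : ℝ := Real.log N with hL
  have hL2 : Real.log 2 ≤ L := Real.log_le_log two_pos hN2
  have hL0 : 0 < L := lt_of_lt_of_le hlog2 hL2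
  set K : ℝ := (M * L) ^ p with hK
  have hK0 : 0 ≤ K := Real.rpow_nonneg (by positivity) p
  set g : ℝ → ℝ := fun s => (t - s) ^ a * s ^ b with hg
  -- pointwise bound
  have key : ∀ s ∈ Ioc (0:ℝ) t, (t - s) ^ a * |I s| ^ p * s ^ b ≤ K * g s := by
    intro s hs
    have hs0 : 0 < s := hs.1
    have hst : s ≤ t := hs.2
    have hIs : |I s| ≤ M * L := by
      have h1 := hI s ⟨hs0, lt_of_le_of_lt hst htu⟩
      have hmin : min ((N:ℝ)^2 * s) 1 ≤ 1 := min_le_right _ _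
      have hmax : max ((N:ℝ)^2 * s) 1 ≤ (N:ℝ)^2 := by
        refine max_le ?_ ?_ <;> nlinarith
      have hlogmax : Real.log (max ((N:ℝ)^2 * s) 1) ≤ 2 * L := by
        calc Real.log (max ((N:ℝ)^2 * s) 1) ≤ Real.log ((N:ℝ)^2) :=
          Real.log_le_log (lt_of_lt_of_le one_pos (le_max_right _ _)) hmax
        _ = 2 * L := by rw [Real.log_pow]; norm_num; exact hL.symm
      have h1L : (1:ℝ) ≤ L / Real.log 2 := (one_le_div hlog2).2 hL2
      have hML : L / Real.log 2 + 2 * L = M * L := by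
        rw [hM]; field_simp
      calc |I s| ≤ min ((N:ℝ)^2 * s) 1 + Real.log (max ((N:ℝ)^2 * s) 1) := h1
      _ ≤ 1 + 2 * L := add_le_add hmin hlogmax
      _ ≤ L / Real.log 2 + 2 * L := add_le_add_left h1L _
      _ = M * L := hML
    have hIsp : |I s| ^ p ≤ K :=
      Real.rpow_le_rpow (abs_nonneg _) hIs hp0
    have hn1 : 0 ≤ (t - s) ^ a := Real.rpow_nonneg (by linarith) a
    have hn2 : 0 ≤ s ^ b := Real.rpow_nonneg hs0.le b
    have hstep : (t - s) ^ a * |I s| ^ p * s ^ b ≤ (t - s) ^ a * K * s ^ b :=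
      mul_le_mul_of_nonneg_right (mul_le_mul_of_nonneg_left hIsp hn1) hn2
    refine le_trans hstep (le_of_eq ?_)
    simp only [hg]
    ring
  -- measurability of g
  have hgm : Measurable g := by rw [hg]; fun_prop
  -- integrability on the two halves
  have hint1 : IntegrableOn g (Ioc 0 (t/2)) := by
    have hmaj : IntegrableOn (fun s => (2:ℝ) ^ |a| * t ^ a * s ^ b) (Ioc 0 (t/2)) := by
      have := (intervalIntegrable_rpow' hb (a := 0) (b := t/2))
      rw [intervalIntegrable_iff_integrableOn_Ioc_of_le ht2.le] at this
      exact this.const_mul _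
    refine hmaj.mono' (hgm.aestronglyMeasurable.restrict) ?_
    refine (ae_restrict_iff' measurableSet_Ioc).2 (ae_of_all _ fun s hs => ?_)
    have hts : t/2 ≤ t - s := by linarith [hs.2]
    have hts' : t - s ≤ t := by linarith [hs.1]
    have hgnn : 0 ≤ g s :=
      mul_nonneg (Real.rpow_nonneg (by linarith [hs.1]) a) (Real.rpow_nonneg hs.1.le b)
    rw [Real.norm_of_nonneg hgnn]
    exact mul_le_mul_of_nonneg_right (half_rpow_bound ht0 hts hts')
      (Real.rpow_nonneg hs.1.le b)
  have hint2 : IntegrableOn g (Ioc (t/2) t) := by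
    have hmaj : IntegrableOn (fun s => (2:ℝ) ^ |b| * t ^ b * (t - s) ^ a) (Ioc (t/2) t) := by
      have h0 := ((intervalIntegrable_rpow' ha (a := 0) (b := t/2)).comp_sub_left t)
      simp only [sub_zero] at h0
      have h0' : IntervalIntegrable (fun x => (t - x) ^ a) volume (t/2) t := by
        have h2 : t - t/2 = t/2 := by ring
        rw [h2] at h0
        exact h0.symm
      rw [intervalIntegrable_iff_integrableOn_Ioc_of_le (by linarith)] at h0'
      exact h0'.const_mul _
    refine hmaj.mono' (hgm.aestronglyMeasurable.restrict) ?_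
    refine (ae_restrict_iff' measurableSet_Ioc).2 (ae_of_all _ fun s hs => ?_)
    have hs2 : t/2 ≤ s := hs.1.le
    have hgnn : 0 ≤ g s :=
      mul_nonneg (Real.rpow_nonneg (by linarith [hs.2]) a)
        (Real.rpow_nonneg (by linarith) b)
    rw [Real.norm_of_nonneg hgnn]
    calc g s = s ^ b * (t - s) ^ a := by rw [hg]; ring
    _ ≤ (2:ℝ) ^ |b| * t ^ b * (t - s) ^ a :=
      mul_le_mul_of_nonneg_right (half_rpow_bound ht0 hs2 hs.2)
        (Real.rpow_nonneg (by linarith [hs.2]) a)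
  have hgint : IntegrableOn g (Ioc 0 t) := by
    have : Ioc (0:ℝ) t = Ioc 0 (t/2) ∪ Ioc (t/2) t :=
      (Set.Ioc_union_Ioc_eq_Ioc (by linarith) (by linarith)).symm
    rw [this]
    exact hint1.union hint2
  -- value bounds for ∫ g on each half
  have hval1 : ∫ s in Ioc (0:ℝ) (t/2), g s ≤
      (2:ℝ) ^ |a| * t ^ a * ((2:ℝ) ^ |b+1| * t ^ (b+1) / (b+1)) := by
    have hmaj : IntegrableOn (fun s => (2:ℝ) ^ |a| * t ^ a * s ^ b) (Ioc 0 (t/2)) := by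
      have := (intervalIntegrable_rpow' hb (a := 0) (b := t/2))
      rw [intervalIntegrable_iff_integrableOn_Ioc_of_le ht2.le] at this
      exact this.const_mul _
    have hmono : ∫ s in Ioc (0:ℝ) (t/2), g s ≤
        ∫ s in Ioc (0:ℝ) (t/2), (2:ℝ) ^ |a| * t ^ a * s ^ b := by
      refine setIntegral_mono_on hint1 hmaj measurableSet_Ioc fun s hs => ?_
      exact mul_le_mul_of_nonneg_right
        (half_rpow_bound ht0 (by linarith [hs.2]) (by linarith [hs.1]))
        (Real.rpow_nonneg hs.1.le b)
    have hcomp : ∫ s in Ioc (0:ℝ) (t/2), (2:ℝ) ^ |a| * t ^ a * s ^ b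
        = (2:ℝ) ^ |a| * t ^ a * ((t/2) ^ (b+1) / (b+1)) := by
      rw [MeasureTheory.integral_const_mul, ← intervalIntegral.integral_of_le ht2.le,
        integral_rpow (Or.inl hb), Real.zero_rpow (by linarith : b + 1 ≠ 0)]
      ring
    have hhalf : (t/2) ^ (b+1) ≤ (2:ℝ) ^ |b+1| * t ^ (b+1) :=
      half_rpow_bound ht0 le_rfl (by linarith)
    calc ∫ s in Ioc (0:ℝ) (t/2), g s ≤ (2:ℝ) ^ |a| * t ^ a * ((t/2) ^ (b+1) / (b+1)) := by
          rw [← hcomp]; exact hmono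
    _ ≤ (2:ℝ) ^ |a| * t ^ a * ((2:ℝ) ^ |b+1| * t ^ (b+1) / (b+1)) := by
          gcongr
  have hval2 : ∫ s in Ioc (t/2) t, g s ≤
      (2:ℝ) ^ |b| * t ^ b * ((2:ℝ) ^ |a+1| * t ^ (a+1) / (a+1)) := by
    have hmaj : IntegrableOn (fun s => (2:ℝ) ^ |b| * t ^ b * (t - s) ^ a) (Ioc (t/2) t) := by
      have h0 := ((intervalIntegrable_rpow' ha (a := 0) (b := t/2)).comp_sub_left t)
      simp only [sub_zero] at h0
      have h0' : IntervalIntegrable (fun x => (t - x) ^ a) volume (t/2) t := by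
        have h2 : t - t/2 = t/2 := by ring
        rw [h2] at h0
        exact h0.symm
      rw [intervalIntegrable_iff_integrableOn_Ioc_of_le (by linarith)] at h0'
      exact h0'.const_mul _
    have hmono : ∫ s in Ioc (t/2) t, g s ≤
        ∫ s in Ioc (t/2) t, (2:ℝ) ^ |b| * t ^ b * (t - s) ^ a := by
      refine setIntegral_mono_on hint2 hmaj measurableSet_Ioc fun s hs => ?_
      calc g s = s ^ b * (t - s) ^ a := by rw [hg]; ring
      _ ≤ (2:ℝ) ^ |b| * t ^ b * (t - s) ^ a :=
        mul_le_mul_of_nonneg_right (half_rpow_bound ht0 hs.1.le hs.2)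
          (Real.rpow_nonneg (by linarith [hs.2]) a)
    have hcomp : ∫ s in Ioc (t/2) t, (2:ℝ) ^ |b| * t ^ b * (t - s) ^ a
        = (2:ℝ) ^ |b| * t ^ b * ((t/2) ^ (a+1) / (a+1)) := by
      rw [MeasureTheory.integral_const_mul, ← intervalIntegral.integral_of_le (by linarith : t/2 ≤ t)]
      have hsub : (∫ s in (t/2)..t, (t - s) ^ a) = ∫ s in (0:ℝ)..(t/2), s ^ a := by
        have h00 := intervalIntegral.integral_comp_sub_left (a := t/2) (b := t)
          (fun x => x ^ a) t
        have h2 : t - t/2 = t/2 := by ring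
        simpa [h2] using h00
      rw [hsub, integral_rpow (Or.inl ha), Real.zero_rpow (by linarith : a + 1 ≠ 0)]
      ring
    have hhalf : (t/2) ^ (a+1) ≤ (2:ℝ) ^ |a+1| * t ^ (a+1) :=
      half_rpow_bound ht0 le_rfl (by linarith)
    calc ∫ s in Ioc (t/2) t, g s ≤ (2:ℝ) ^ |b| * t ^ b * ((t/2) ^ (a+1) / (a+1)) := by
          rw [← hcomp]; exact hmono
    _ ≤ (2:ℝ) ^ |b| * t ^ b * ((2:ℝ) ^ |a+1| * t ^ (a+1) / (a+1)) := by
          gcongr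
  -- combine
  have hgsplit : ∫ s in Ioc (0:ℝ) t, g s
      = (∫ s in Ioc (0:ℝ) (t/2), g s) + ∫ s in Ioc (t/2) t, g s := by
    rw [← MeasureTheory.setIntegral_union (Set.Ioc_disjoint_Ioc_of_le le_rfl) measurableSet_Ioc
      hint1 hint2, Set.Ioc_union_Ioc_eq_Ioc (by linarith) (by linarith)]
  have hgbound : ∫ s in Ioc (0:ℝ) t, g s ≤
      ((2:ℝ) ^ |a| * ((2:ℝ) ^ |b+1| / (b+1)) +
        (2:ℝ) ^ |b| * ((2:ℝ) ^ |a+1| / (a+1))) * t ^ (a+b+1) := by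
    rw [hgsplit]
    have hta : t ^ a * t ^ (b+1) = t ^ (a+b+1) := by
      rw [← Real.rpow_add ht0]; ring_nf
    have htb : t ^ b * t ^ (a+1) = t ^ (a+b+1) := by
      rw [← Real.rpow_add ht0]; ring_nf
    calc (∫ s in Ioc (0:ℝ) (t/2), g s) + ∫ s in Ioc (t/2) t, g s
        ≤ (2:ℝ) ^ |a| * t ^ a * ((2:ℝ) ^ |b+1| * t ^ (b+1) / (b+1)) +
          (2:ℝ) ^ |b| * t ^ b * ((2:ℝ) ^ |a+1| * t ^ (a+1) / (a+1)) :=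
        add_le_add hval1 hval2
    _ = (2:ℝ) ^ |a| * ((2:ℝ) ^ |b+1| / (b+1)) * (t ^ a * t ^ (b+1)) +
        (2:ℝ) ^ |b| * ((2:ℝ) ^ |a+1| / (a+1)) * (t ^ b * t ^ (a+1)) := by ring
    _ = _ := by rw [hta, htb]; ring
  -- main estimate
  have hmain : ∫ s in (0:ℝ)..t, (t - s) ^ a * |I s| ^ p * s ^ b
      ≤ K * ∫ s in Ioc (0:ℝ) t, g s := by
    rw [intervalIntegral.integral_of_le ht0.le, ← MeasureTheory.integral_const_mul]
    refine integral_mono_of_nonneg ?_ (hgint.const_mul K) ?_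
    · refine (ae_restrict_iff' measurableSet_Ioc).2 (ae_of_all _ fun s hs => ?_)
      have := Real.rpow_nonneg (show (0:ℝ) ≤ t - s by linarith [hs.2]) a
      have := Real.rpow_nonneg (abs_nonneg (I s)) p
      have := Real.rpow_nonneg hs.1.le b
      positivity
    · exact (ae_restrict_iff' measurableSet_Ioc).2 (ae_of_all _ key)
  have hKsplit : K = M ^ p * L ^ p := Real.mul_rpow hM0.le hL0.le
  calc ∫ s in (0:ℝ)..t, (t - s) ^ a * |I s| ^ p * s ^ b
      ≤ K * ∫ s in Ioc (0:ℝ) t, g s := hmain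
  _ ≤ K * (((2:ℝ) ^ |a| * ((2:ℝ) ^ |b+1| / (b+1)) +
        (2:ℝ) ^ |b| * ((2:ℝ) ^ |a+1| / (a+1))) * t ^ (a+b+1)) :=
      mul_le_mul_of_nonneg_left hgbound hK0
  _ = M ^ p * ((2:ℝ) ^ |a| * ((2:ℝ) ^ |b+1| / (b+1)) +
        (2:ℝ) ^ |b| * ((2:ℝ) ^ |a+1| / (a+1))) * t ^ (a+b+1) * L ^ p := by
      rw [hKsplit]; ring
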